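/- Let (T, r, β, γ) be a pre-tree decomposition of a graph G and (T', r) a subtree of (T, r) with the same root in which every edge is exact. Then for every node t ∈ V(T'), with P_t the path from r to t and p_s the parent of s, we have Σ_{s ∈ P_t\{r}} |δ(π_s) \ δ(π_{p_s})| = |⋃_{s ∈ P_t} δ(π_s)|. -/

import Mathlib

/-- The boundary of an edge set `X` inside the edge set `E` of a graph:
vertices incident both to an edge in `X` and to an edge in `E \ X`. -/
def bdry {V : Type*} (E X : Set (Finset V)) : Set V :=
  {v | ∃ e ∈ X, ∃ e' ∈ E \ X, v ∈ e ∧ v ∈ e'}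

/-- `E` is the edge set of a (finite) graph: every edge is a nonempty set of at most 2 vertices. -/
def IsGraphEdges {V : Type*} (E : Set (Finset V)) : Prop :=
  ∀ e ∈ E, e.Nonempty ∧ e.card ≤ 2
/-- A rooted tree given by a parent function: every node reaches the root by
iterating the parent function. -/
structure ParentTree (TV : Type*) where
  root : TV
  par : TV → TV
  par_root : par root = root
  reaches : ∀ t, ∃ n, par^[n] t = root

/-- The underlying (simple) tree graph of a rooted tree. -/
def treeGraph {TV : Type*} (R : ParentTree TV) : SimpleGraph TV :=
  SimpleGraph.fromRel (fun s t => s ≠ R.root ∧ R.par s = t)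

/-- Adjacency in the tree. -/
def treeAdj {TV : Type*} (R : ParentTree TV) (s t : TV) : Prop := (treeGraph R).Adj s t

/-- A leaf of the rooted tree: a non-root node with no children. -/
def IsTreeLeaf {TV : Type*} (R : ParentTree TV) (t : TV) : Prop :=
  t ≠ R.root ∧ ∀ c, c ≠ R.root → R.par c ≠ t

/-- A node of a rooted tree with no children (used for leaves in depth bounds). -/
def NoChild {TV : Type*} (R : ParentTree TV) (t : TV) : Prop :=
  ∀ c, c ≠ R.root → R.par c ≠ t

/-- The set of nodes on the path from `t` to the root. -/
def pathSet {TV : Type*} (R : ParentTree TV) (t : TV) : Set TV :=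
  {s | ∃ i, R.par^[i] t = s}

/-- `(T, r, β)` is a tree decomposition of the graph with edge set `E` on vertex set `V`:
(T1) every vertex and every edge is covered by some bag, and
(T2) for each vertex, the set of nodes whose bag contains it induces a connected
subgraph of the tree. -/
def IsTreeDecomp {V : Type*} (E : Set (Finset V)) {TV : Type*} (R : ParentTree TV)
    (β : TV → Set V) : Prop :=
  (∀ v : V, ∃ t, v ∈ β t) ∧
  (∀ e ∈ E, ∃ t, (e : Set V) ⊆ β t) ∧
  (∀ v : V, ((treeGraph R).induce {t | v ∈ β t}).Connected)

/-- The tree decomposition has width at most `k - 1`, i.e. all bags have size at most `k`. -/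
def TDWidthLe {V TV : Type*} (β : TV → Set V) (k : ℕ) : Prop :=
  ∀ t, (β t).ncard ≤ k

/-- The tree decomposition has depth at most `q`: for every leaf, the union of the
bags on the path from the root to the leaf has size at most `q`. -/
def TDDepthLe {V TV : Type*} (R : ParentTree TV) (β : TV → Set V) (q : ℕ) : Prop :=
  ∀ ℓ, NoChild R ℓ → (⋃ s ∈ pathSet R ℓ, β s).ncard ≤ q
/-- Two edges are in the same connected component of the graph with edge set `E`. -/
def EdgeConnRel {V : Type*} [DecidableEq V] (E : Set (Finset V)) :
    Finset V → Finset V → Prop :=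
  Relation.ReflTransGen (fun a b => a ∈ E ∧ b ∈ E ∧ (a ∩ b).Nonempty)

/-- The edge set of the connected component containing the edge `e`. -/
def edgeComp {V : Type*} [DecidableEq V] (E : Set (Finset V)) (e : Finset V) :
    Set (Finset V) :=
  {e' | e' ∈ E ∧ EdgeConnRel E e e'}

/-- `δ(π_t)`: the boundary of the partition of `E` given by the cones from `t`
towards its neighbours. -/
def deltaNode {V TV : Type*} (E : Set (Finset V)) (R : ParentTree TV)
    (γ : TV → TV → Set (Finset V)) (t : TV) : Set V :=
  ⋃ s ∈ {s | treeAdj R t s}, bdry E (γ t s)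

/-- A pre-tree decomposition of the graph with edge set `E`: axioms (PT1)–(PT4). -/
structure IsPreTreeDecomp {V : Type*} [DecidableEq V] (E : Set (Finset V)) {TV : Type*}
    (R : ParentTree TV) (β : TV → Set V) (γ : TV → TV → Set (Finset V)) : Prop where
  cone_sub : ∀ s t, treeAdj R s t → γ s t ⊆ E
  root_bag : β R.root = ∅
  pt1 : ∀ e ∈ E, ∃ c, c ≠ R.root ∧ R.par c = R.root ∧ γ R.root c = edgeComp E e
  pt2 : ∀ ℓ, IsTreeLeaf R ℓ → (γ ℓ (R.par ℓ)).ncard ≤ 1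
  pt3_disj : ∀ t s s', treeAdj R t s → treeAdj R t s' → s ≠ s' →
      Disjoint (γ t s) (γ t s')
  pt3_cover : ∀ t, ¬ IsTreeLeaf R t → (⋃ s ∈ {s | treeAdj R t s}, γ t s) = E
  pt3_bag : ∀ t, deltaNode E R γ t ⊆ β t
  pt4 : ∀ s t, treeAdj R s t → Disjoint (γ s t) (γ t s)

/-- The tree edge `st` is exact: the two opposite cones cover all of `E`. -/
def ExactEdge {V TV : Type*} (E : Set (Finset V)) (γ : TV → TV → Set (Finset V))
    (s t : TV) : Prop :=
  γ s t ∪ γ t s = E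

/-- The pre-tree decomposition has width at most `k - 1`. -/
def PTDWidthLe {V TV : Type*} (β : TV → Set V) (k : ℕ) : Prop :=
  ∀ t, (β t).ncard ≤ k

/-- The pre-tree decomposition has depth at most `q`:
`Σ_{s ∈ P_t \ {r}} |β(s) \ β(parent s)| ≤ q` along every root-to-node path. -/
def PTDDepthLe {V TV : Type*} (R : ParentTree TV) (β : TV → Set V) (q : ℕ) : Prop :=
  ∀ t n, R.par^[n] t = R.root →
    ∑ i ∈ Finset.range n, ((β (R.par^[i] t)) \ (β (R.par^[(i+1)] t))).ncard ≤ q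

/-- A subtree of the rooted tree with the same root: a set of nodes containing the
root and closed under taking parents. -/
def IsRootedSubtree {TV : Type*} (R : ParentTree TV) (S : Set TV) : Prop :=
  R.root ∈ S ∧ ∀ t ∈ S, t ≠ R.root → R.par t ∈ S

/-- A leaf of the subtree `S`: a node of `S` with no children inside `S`. -/
def SubLeaf {TV : Type*} (R : ParentTree TV) (S : Set TV) (ℓ : TV) : Prop :=
  ℓ ∈ S ∧ ∀ c ∈ S, c ≠ R.root → R.par c ≠ ℓ

/-- All edges of the subtree `S` are exact. -/
def SubtreeExact {V TV : Type*} (E : Set (Finset V)) (R : ParentTree TV)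
    (γ : TV → TV → Set (Finset V)) (S : Set TV) : Prop :=
  ∀ t ∈ S, t ≠ R.root → ExactEdge E γ (R.par t) t

/-- Auxiliary: telescoping sum for a family with the interval property. -/
lemma sum_sdiff_ncard_aux {V : Type*} [Fintype V] (A : ℕ → Set V) :
    ∀ n, (∀ i m j, i ≤ m → m ≤ j → j ≤ n → A i ∩ A j ⊆ A m) →
    ∑ i ∈ Finset.range n, (A i \ A (i+1)).ncard
      = ((⋃ i ∈ Finset.range (n+1), A i) \ A n).ncard := by
  intro n
  induction n with
  | zero => intro _; simp
  | succ n ih =>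
    intro h
    rw [Finset.sum_range_succ, ih (fun i m j hi hm hj => h i m j hi hm (hj.trans n.le_succ))]
    have hU : (⋃ i ∈ Finset.range (n+2), A i) \ A (n+1)
        = ((⋃ i ∈ Finset.range (n+1), A i) \ A n) ∪ (A n \ A (n+1)) := by
      ext v
      simp only [Set.mem_diff, Set.mem_iUnion, Set.mem_union, Finset.mem_range]
      constructor
      · rintro ⟨⟨i, hi, hv⟩, hv1⟩
        by_cases hvn : v ∈ A n
        · exact Or.inr ⟨hvn, hv1⟩
        · have hin : i ≠ n + 1 := by rintro rfl; exact hv1 hv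
          exact Or.inl ⟨⟨i, by omega, hv⟩, hvn⟩
      · rintro (⟨⟨i, hi, hv⟩, hvn⟩ | ⟨hvn, hv1⟩)
        · refine ⟨⟨i, by omega, hv⟩, fun hv1 => hvn ?_⟩
          exact h i n (n+1) (by omega) (by omega) le_rfl ⟨hv, hv1⟩
        · exact ⟨⟨n, by omega, hvn⟩, hv1⟩
    rw [hU, Set.ncard_union_eq ?_ (Set.toFinite _) (Set.toFinite _)]
    exact Set.disjoint_left.2 fun v hv hv' => hv.2 hv'.1

/-- If all edges of a subtree with the same root are exact, then along every
root-to-node path within the subtree,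
`Σ_{s ∈ P_t \ {r}} |δ(π_s) \ δ(π_{parent s})| = |⋃_{s ∈ P_t} δ(π_s)|`. -/
theorem depth_sum_eq_union {V : Type*} [Fintype V] [DecidableEq V]
    (E : Set (Finset V)) (hG : IsGraphEdges E)
    {TV : Type*} [Fintype TV] (R : ParentTree TV) (β : TV → Set V)
    (γ : TV → TV → Set (Finset V))
    (hptd : IsPreTreeDecomp E R β γ)
    (S : Set TV) (hS : IsRootedSubtree R S)
    (hex : SubtreeExact E R γ S)
    (t : TV) (ht : t ∈ S) (n : ℕ) (hn : R.par^[n] t = R.root) :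
    ∑ i ∈ Finset.range n,
        ((deltaNode E R γ (R.par^[i] t)) \ (deltaNode E R γ (R.par^[(i+1)] t))).ncard
      = (⋃ i ∈ Finset.range (n + 1), deltaNode E R γ (R.par^[i] t)).ncard := by
  classical
  set s : ℕ → TV := fun k => R.par^[k] t with hs
  have hpar : ∀ k, R.par (s k) = s (k+1) := fun k =>
    (Function.iterate_succ_apply' R.par k t).symm
  have hmemS : ∀ k, s k ∈ S := by
    intro k; induction k with
    | zero => exact ht
    | succ k ih =>
      by_cases hk : s k = R.root
      · rw [← hpar k, hk, R.par_root]; exact hS.1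
      · rw [← hpar k]; exact hS.2 _ ih hk
  have hroot_mono : ∀ k d, s k = R.root → s (k + d) = R.root := by
    intro k d hk
    induction d with
    | zero => exact hk
    | succ d ihd =>
      have : s (k + d + 1) = R.par (s (k + d)) := (hpar (k + d)).symm
      rw [show k + (d+1) = k + d + 1 by omega, this, ihd, R.par_root]
  have hroot_mono' : ∀ k l, k ≤ l → s l ≠ R.root → s k ≠ R.root := by
    intro k l hkl hl hk
    obtain ⟨d, rfl⟩ := Nat.exists_eq_add_of_le hkl
    exact hl (hroot_mono k d hk)
  have hfix : ∀ u, R.par u = u → u = R.root := by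
    intro u hu
    obtain ⟨k, hk⟩ := R.reaches u
    have hit : ∀ m, R.par^[m] u = u := by
      intro m; induction m with
      | zero => rfl
      | succ m ihm => rw [Function.iterate_succ_apply', ihm, hu]
    rw [hit k] at hk; exact hk
  have hadj : ∀ k, s k ≠ R.root → treeAdj R (s k) (s (k+1)) := by
    intro k hk
    have hne : s k ≠ s (k+1) := fun h => hk (hfix _ (by rw [hpar k, h]))
    exact ⟨hne, Or.inl ⟨hk, hpar k⟩⟩
  have hadj' : ∀ k, s k ≠ R.root → treeAdj R (s (k+1)) (s k) := by
    intro k hk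
    have hne : s k ≠ s (k+1) := fun h => hk (hfix _ (by rw [hpar k, h]))
    exact ⟨hne.symm, Or.inr ⟨hk, hpar k⟩⟩
  have hdist : ∀ k, s k ≠ R.root → s (k+2) ≠ s k := by
    intro k hk heq
    have hk1 : s (k+1) ≠ R.root := by
      intro h
      apply hk
      have h2 : s (k + 2) = R.root := by
        rw [show k + 2 = (k+1) + 1 by omega, ← hpar (k+1), h, R.par_root]
      rw [← heq, h2]
    have hcyc : ∀ m, R.par^[m] (s k) = s k ∨ R.par^[m] (s k) = s (k+1) := by
      intro m; induction m with
      | zero => exact Or.inl rfl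
      | succ m ihm =>
        rcases ihm with h | h
        · rw [Function.iterate_succ_apply', h, hpar k]; exact Or.inr rfl
        · rw [Function.iterate_succ_apply', h, hpar (k+1)]
          exact Or.inl (by rw [show k + 1 + 1 = k + 2 by omega, heq])
    obtain ⟨m, hm⟩ := R.reaches (s k)
    rcases hcyc m with h | h
    · exact hk (h ▸ hm)
    · exact hk1 (h ▸ hm)
  -- cones along the path
  set X : ℕ → Set (Finset V) := fun k => γ (s k) (s (k+1)) with hX
  have hXE : ∀ k, s k ≠ R.root → X k ⊆ E := fun k hk =>
    hptd.cone_sub _ _ (hadj k hk)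
  have hexact : ∀ k, s k ≠ R.root → γ (s (k+1)) (s k) = E \ X k := by
    intro k hk
    have hu : γ (R.par (s k)) (s k) ∪ γ (s k) (R.par (s k)) = E := hex (s k) (hmemS k) hk
    rw [hpar k] at hu
    have hd : Disjoint (X k) (γ (s (k+1)) (s k)) := hptd.pt4 _ _ (hadj k hk)
    ext e
    constructor
    · intro he
      refine ⟨hu ▸ Or.inl he, fun heX => ?_⟩
      exact Set.disjoint_left.1 hd heX he
    · rintro ⟨heE, heX⟩
      have : e ∈ γ (s (k+1)) (s k) ∪ γ (s k) (s (k+1)) := hu.symm ▸ heE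
      rcases this with h | h
      · exact h
      · exact absurd h heX
  have hnest : ∀ k, s (k+1) ≠ R.root → X (k+1) ⊆ X k := by
    intro k hk1
    have hk : s k ≠ R.root := hroot_mono' k (k+1) (by omega) hk1
    have hd : Disjoint (γ (s (k+1)) (s (k+2))) (γ (s (k+1)) (s k)) :=
      hptd.pt3_disj (s (k+1)) (s (k+2)) (s k) (hadj (k+1) hk1) (hadj' k hk) (hdist k hk)
    intro e he
    have heE : e ∈ E := hXE (k+1) hk1 he
    have : e ∉ γ (s (k+1)) (s k) := fun h => Set.disjoint_left.1 hd he h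
    rw [hexact k hk] at this
    by_contra heX
    exact this ⟨heE, heX⟩
  have hnest' : ∀ k l, k ≤ l → s l ≠ R.root → X l ⊆ X k := by
    intro k l hkl hl
    obtain ⟨d, rfl⟩ := Nat.exists_eq_add_of_le hkl
    clear hkl
    induction d with
    | zero => exact subset_rfl
    | succ d ihd =>
      have hkd : s (k + d) ≠ R.root :=
        hroot_mono' (k + d) (k + (d+1)) (by omega) hl
      have h1 : X (k + (d+1)) ⊆ X (k + d) := by
        rw [show k + (d+1) = (k + d) + 1 by omega] at hl ⊢
        exact hnest (k + d) hl
      exact h1.trans (ihd hkd)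
  have hdelta_root : ∀ k, s k = R.root → deltaNode E R γ (s k) = ∅ := by
    intro k hk
    rw [hk]
    have := hptd.pt3_bag R.root
    rw [hptd.root_bag] at this
    exact Set.subset_empty_iff.1 this
  -- Claim A: a vertex in δ(π_{s k}) touches the down side of the cut X k
  have htouchA : ∀ k, s k ≠ R.root → ∀ v ∈ deltaNode E R γ (s k),
      ∃ e ∈ E \ X k, v ∈ e := by
    intro k hk v hv
    obtain ⟨w, hw, hvb⟩ : ∃ w, treeAdj R (s k) w ∧ v ∈ bdry E (γ (s k) w) := by
      simpa [deltaNode, Set.mem_iUnion] using hv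
    obtain ⟨e, he, e', he', hve, hve'⟩ := hvb
    by_cases hws : w = s (k+1)
    · subst hws; exact ⟨e', he', hve'⟩
    · have hd : Disjoint (γ (s k) w) (X k) :=
        hptd.pt3_disj (s k) w (s (k+1)) hw (hadj k hk) hws
      exact ⟨e, ⟨hptd.cone_sub _ _ hw he, fun hX => Set.disjoint_left.1 hd he hX⟩, hve⟩
  -- Claim B: a vertex in δ(π_{s (k+1)}) touches the up side of the cut X k
  have htouchB : ∀ k, s (k+1) ≠ R.root → ∀ v ∈ deltaNode E R γ (s (k+1)),
      ∃ e ∈ X k, v ∈ e := by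
    intro k hk1 v hv
    have hk : s k ≠ R.root := hroot_mono' k (k+1) (by omega) hk1
    obtain ⟨w, hw, hvb⟩ : ∃ w, treeAdj R (s (k+1)) w ∧ v ∈ bdry E (γ (s (k+1)) w) := by
      simpa [deltaNode, Set.mem_iUnion] using hv
    obtain ⟨e, he, e', he', hve, hve'⟩ := hvb
    by_cases hws : w = s k
    · subst hws
      rw [hexact k hk] at he'
      obtain ⟨he'E, he'X⟩ := he'
      have : e' ∈ X k := by
        by_contra h
        exact he'X ⟨he'E, h⟩
      exact ⟨e', this, hve'⟩
    · have hd : Disjoint (γ (s (k+1)) w) (γ (s (k+1)) (s k)) :=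
        hptd.pt3_disj (s (k+1)) w (s k) hw (hadj' k hk) hws
      have heE : e ∈ E := hptd.cone_sub _ _ hw he
      have : e ∉ γ (s (k+1)) (s k) := fun h => Set.disjoint_left.1 hd he h
      rw [hexact k hk] at this
      have heX : e ∈ X k := by
        by_contra h
        exact this ⟨heE, h⟩
      exact ⟨e, heX, hve⟩
  -- interval property
  have hint : ∀ i m j, i ≤ m → m ≤ j → j ≤ n →
      deltaNode E R γ (s i) ∩ deltaNode E R γ (s j) ⊆ deltaNode E R γ (s m) := by
    intro i m j him hmj hjn v hv
    obtain ⟨hvi, hvj⟩ := hv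
    rcases him.eq_or_lt with rfl | him'
    · exact hvi
    rcases hmj.eq_or_lt with rfl | hmj'
    · exact hvj
    have hjroot : s j ≠ R.root := by
      intro h
      rw [hdelta_root j h] at hvj
      exact hvj
    have hiroot : s i ≠ R.root := hroot_mono' i j (by omega) hjroot
    have hmroot : s m ≠ R.root := hroot_mono' m j (by omega) hjroot
    have hj1 : j - 1 + 1 = j := by omega
    obtain ⟨e', he', hve'⟩ := htouchA i hiroot v hvi
    obtain ⟨e, he, hve⟩ := htouchB (j-1) (by rw [hj1]; exact hjroot) v (by rw [hj1]; exact hvj)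
    have hXmXi : X m ⊆ X i := hnest' i m (by omega) hmroot
    have hXj1Xm : X (j-1) ⊆ X m := by
      refine hnest' m (j-1) (by omega) ?_
      exact hroot_mono' (j-1) j (by omega) hjroot
    have heXm : e ∈ X m := hXj1Xm he
    have he'Xm : e' ∈ E \ X m := ⟨he'.1, fun h => he'.2 (hXmXi h)⟩
    have : v ∈ bdry E (γ (s m) (s (m+1))) := ⟨e, heXm, e', he'Xm, hve, hve'⟩
    simp only [deltaNode, Set.mem_iUnion, Set.mem_setOf_eq]
    exact ⟨s (m+1), hadj m hmroot, this⟩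
  have key := sum_sdiff_ncard_aux (fun k => deltaNode E R γ (s k)) n hint
  have hAn : deltaNode E R γ (s n) = ∅ := hdelta_root n hn
  rw [hAn, Set.diff_empty] at key
  exact key
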